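/- With respect to the Fischer-type inner product on degree-d polynomial vector fields, the adjoint of the homological operator ad_N h(xi) = Dh(xi) N xi - N h(xi) is ad_{N^*}, where N^* is the transpose of N. -/

import Mathlib

open MvPolynomial Matrix

noncomputable def Pnd (n d : ℕ) : Submodule ℝ (MvPolynomial (Fin n) ℝ) :=
  homogeneousSubmodule (Fin n) ℝ d

noncomputable def Fnd (n d : ℕ) : Submodule ℝ (Fin n → MvPolynomial (Fin n) ℝ) :=
  Submodule.pi Set.univ fun _ => homogeneousSubmodule (Fin n) ℝ d

noncomputable def divL (n : ℕ) : (Fin n → MvPolynomial (Fin n) ℝ) →ₗ[ℝ] MvPolynomial (Fin n) ℝ :=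
  ∑ i, (pderiv i).toLinearMap ∘ₗ LinearMap.proj i

noncomputable def adL {n : ℕ} (N : Matrix (Fin n) (Fin n) ℝ) :
    (Fin n → MvPolynomial (Fin n) ℝ) →ₗ[ℝ] (Fin n → MvPolynomial (Fin n) ℝ) :=
  LinearMap.pi fun i =>
    (∑ j, (LinearMap.mulLeft ℝ (∑ k, N j k • (X k : MvPolynomial (Fin n) ℝ))) ∘ₗ
        (pderiv j).toLinearMap ∘ₗ LinearMap.proj i)
      - ∑ j, N i j • LinearMap.proj j

noncomputable def diffOp {n : ℕ} (m : Fin n →₀ ℕ) :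
    Module.End ℝ (MvPolynomial (Fin n) ℝ) :=
  (List.finRange n).foldr
    (fun i f => (((pderiv i).toLinearMap : Module.End ℝ (MvPolynomial (Fin n) ℝ)) ^ (m i)) * f) 1

/-- Fischer inner product `⟨p,q⟩ = p(∂_ξ) q(ξ) |_{ξ=0}`. -/
noncomputable def fischer {n : ℕ} (p q : MvPolynomial (Fin n) ℝ) : ℝ :=
  constantCoeff (∑ m ∈ p.support, p.coeff m • (diffOp m q))

noncomputable def fischerV {n : ℕ} (p q : Fin n → MvPolynomial (Fin n) ℝ) : ℝ :=
  ∑ i, fischer (p i) (q i)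

noncomputable def radialL (n : ℕ) : MvPolynomial (Fin n) ℝ →ₗ[ℝ] (Fin n → MvPolynomial (Fin n) ℝ) :=
  LinearMap.pi fun i => LinearMap.mulLeft ℝ (X i)

noncomputable def Und (n d : ℕ) : Submodule ℝ (Fin n → MvPolynomial (Fin n) ℝ) :=
  Submodule.map (radialL n) (Pnd n (d - 1))

def N3 : Matrix (Fin 3) (Fin 3) ℝ := !![0,1,0; 0,0,1; 0,0,0]

noncomputable def B3 : MvPolynomial (Fin 3) ℝ := 2 * X 0 * X 2 - X 1 ^ 2
lemma pderiv_pow_monomial {n : ℕ} (i : Fin n) (k : ℕ) (s : Fin n →₀ ℕ) (c : ℝ) :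
    (((pderiv i).toLinearMap : Module.End ℝ (MvPolynomial (Fin n) ℝ)) ^ k) (monomial s c)
      = monomial (s - Finsupp.single i k) (c * (s i).descFactorial k) := by
  induction k with
  | zero => simp
  | succ k ih =>
    rw [pow_succ', Module.End.mul_apply, ih]
    show (pderiv i) _ = _
    rw [pderiv_monomial, tsub_tsub, ← Finsupp.single_add, Finsupp.tsub_apply,
      Finsupp.single_eq_same]
    push_cast [Nat.descFactorial_succ]
    ring_nf

lemma sum_single_apply_of_not_mem {n : ℕ} (m : Fin n →₀ ℕ) (L : List (Fin n)) (i : Fin n)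
    (hi : i ∉ L) : ((L.map fun j => Finsupp.single j (m j)).sum) i = 0 := by
  induction L with
  | nil => simp
  | cons a L ihL =>
    simp only [List.mem_cons, not_or] at hi
    simp [List.map_cons, List.sum_cons, Finsupp.add_apply,
      Finsupp.single_apply, Ne.symm hi.1, ihL hi.2]

lemma foldr_monomial {n : ℕ} (m : Fin n →₀ ℕ) (s : Fin n →₀ ℕ) (c : ℝ)
    (L : List (Fin n)) (hL : L.Nodup) :
    ((L.foldr
      (fun i f => (((pderiv i).toLinearMap : Module.End ℝ (MvPolynomial (Fin n) ℝ)) ^ (m i)) * f) 1)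
      (monomial s c))
      = monomial (s - (L.map fun j => Finsupp.single j (m j)).sum)
          (c * ((L.map fun j => ((s j).descFactorial (m j) : ℝ)).prod)) := by
  induction L with
  | nil => simp
  | cons i L ih =>
    obtain ⟨hi, hL⟩ := List.nodup_cons.mp hL
    rw [List.foldr_cons, Module.End.mul_apply, ih hL, pderiv_pow_monomial]
    rw [Finsupp.tsub_apply, sum_single_apply_of_not_mem m L i hi, Nat.sub_zero,
      tsub_tsub, List.map_cons, List.sum_cons, List.map_cons, List.prod_cons, add_comm]
    ring_nf

lemma diffOp_monomial {n : ℕ} (m s : Fin n →₀ ℕ) (c : ℝ) :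
    diffOp m (monomial s c)
      = monomial (s - m) (c * ∏ i, ((s i).descFactorial (m i) : ℝ)) := by
  rw [diffOp, foldr_monomial m s c _ (List.nodup_finRange n),
    ← Fin.prod_univ_def fun j => ((s j).descFactorial (m j) : ℝ)]
  congr 2
  rw [← Fin.sum_univ_def (fun j => Finsupp.single j (m j)), Finsupp.univ_sum_single]

lemma constantCoeff_diffOp {n : ℕ} (m : Fin n →₀ ℕ) (q : MvPolynomial (Fin n) ℝ) :
    constantCoeff (diffOp m q) = (∏ i, ((m i).factorial : ℝ)) * coeff m q := by
  induction q using MvPolynomial.induction_on' with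
  | monomial s c =>
    rw [diffOp_monomial, constantCoeff_monomial, coeff_monomial]
    by_cases h : s = m
    · subst h
      simp [Nat.descFactorial_self]
      ring
    · rw [if_neg h, mul_zero]
      by_cases hle : s - m = 0
      · rw [if_pos hle]
        have hsm : s ≤ m := tsub_eq_zero_iff_le.mp hle
        have : ∃ i, s i < m i := by
          by_contra hc
          push_neg at hc
          exact h (Finsupp.ext fun i => le_antisymm (Finsupp.le_def.mp hsm i) (hc i))
        obtain ⟨i, hi⟩ := this
        rw [Finset.prod_eq_zero (Finset.mem_univ i), mul_zero]
        exact_mod_cast congrArg (Nat.cast : ℕ → ℝ)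
          (Nat.descFactorial_eq_zero_iff_lt.mpr hi)
      · rw [if_neg hle]
  | add p q hp hq =>
    rw [map_add (diffOp m), map_add, hp, hq, coeff_add]
    ring
lemma fischer_eq_sum (p q : MvPolynomial (Fin n) ℝ) (S : Finset (Fin n →₀ ℕ))
    (hS : p.support ⊆ S) :
    fischer p q = ∑ m ∈ S, (∏ i, ((m i).factorial : ℝ)) * coeff m p * coeff m q := by
  have h1 : fischer p q
      = ∑ m ∈ p.support, (∏ i, ((m i).factorial : ℝ)) * coeff m p * coeff m q := by
    rw [fischer, map_sum]
    refine Finset.sum_congr rfl fun m hm => ?_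
    show constantCoeff (coeff m p • (diffOp m) q) = _
    rw [MvPolynomial.smul_eq_C_mul, _root_.map_mul, constantCoeff_C, constantCoeff_diffOp]
    ring
  rw [h1, Finset.sum_subset hS]
  intro m _ hm
  rw [MvPolynomial.notMem_support_iff.mp hm]
  ring

lemma fischer_symm (p q : MvPolynomial (Fin n) ℝ) : fischer p q = fischer q p := by
  rw [fischer_eq_sum p q (p.support ∪ q.support) Finset.subset_union_left,
    fischer_eq_sum q p (p.support ∪ q.support) Finset.subset_union_right]
  exact Finset.sum_congr rfl fun m _ => by ring

lemma coeff_pderiv (j : Fin n) (q : MvPolynomial (Fin n) ℝ) (m : Fin n →₀ ℕ) :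
    coeff m (pderiv j q) = ((m j + 1 : ℕ) : ℝ) * coeff (m + Finsupp.single j 1) q := by
  induction q using MvPolynomial.induction_on' with
  | monomial s c =>
    rw [pderiv_monomial, coeff_monomial, coeff_monomial]
    by_cases h : s = m + Finsupp.single j 1
    · subst h
      rw [if_pos rfl, if_pos (add_tsub_cancel_right m (Finsupp.single j 1))]
      rw [Finsupp.add_apply, Finsupp.single_eq_same]
      push_cast
      ring
    · rw [if_neg h, mul_zero]
      by_cases h2 : s - Finsupp.single j 1 = m
      · rw [if_pos h2]
        have hsj : s j = 0 := by
          by_contra hc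
          refine h ?_
          rw [← h2, tsub_add_cancel_of_le]
          rw [Finsupp.single_le_iff]
          omega
        rw [hsj]
        simp
      · rw [if_neg h2]
  | add a b ha hb =>
    rw [map_add, coeff_add, coeff_add, ha, hb]
    ring

lemma prod_factorial_add_single (m : Fin n →₀ ℕ) (j : Fin n) :
    (∏ i : Fin n, (((Finsupp.single j 1 + m : Fin n →₀ ℕ) i).factorial : ℝ))
      = ((m j + 1 : ℕ) : ℝ) * ∏ i : Fin n, ((m i).factorial : ℝ) := by
  rw [← Finset.mul_prod_erase _ _ (Finset.mem_univ j),
    ← Finset.mul_prod_erase _ (fun i => ((m i).factorial : ℝ)) (Finset.mem_univ j)]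
  have h1 : ∀ i ∈ Finset.univ.erase j, (((Finsupp.single j 1 + m : Fin n →₀ ℕ) i).factorial : ℝ)
      = ((m i).factorial : ℝ) := by
    intro i hi
    rw [Finsupp.add_apply, Finsupp.single_apply, if_neg (Finset.ne_of_mem_erase hi).symm,
      zero_add]
  rw [Finset.prod_congr rfl h1, Finsupp.add_apply, Finsupp.single_eq_same]
  have : (1 + m j).factorial = (m j + 1) * (m j).factorial := by
    rw [add_comm 1 (m j), Nat.factorial_succ]
  rw [this]
  push_cast
  ring

lemma fischer_X_mul (j : Fin n) (p q : MvPolynomial (Fin n) ℝ) :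
    fischer (X j * p) q = fischer p (pderiv j q) := by
  have hsub : (X j * p).support ⊆ Finset.map (addLeftEmbedding (Finsupp.single j 1)) p.support := by
    rw [MvPolynomial.support_X_mul]
  rw [fischer_eq_sum (X j * p) q _ hsub,
    fischer_eq_sum p (pderiv j q) p.support subset_rfl, Finset.sum_map]
  refine Finset.sum_congr rfl fun m hm => ?_
  rw [show (addLeftEmbedding (Finsupp.single j 1)) m = Finsupp.single j 1 + m from rfl,
    coeff_X_mul, coeff_pderiv, prod_factorial_add_single, add_comm (Finsupp.single j 1) m]
  ring
lemma fischer_sub_right (p a b : MvPolynomial (Fin n) ℝ) :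
    fischer p (a - b) = fischer p a - fischer p b := by
  rw [fischer_eq_sum p (a - b) _ subset_rfl, fischer_eq_sum p a _ subset_rfl,
    fischer_eq_sum p b _ subset_rfl, ← Finset.sum_sub_distrib]
  exact Finset.sum_congr rfl fun m _ => by rw [coeff_sub]; ring

lemma fischer_sum_right {ι : Type*} (p : MvPolynomial (Fin n) ℝ) (s : Finset ι)
    (f : ι → MvPolynomial (Fin n) ℝ) :
    fischer p (∑ x ∈ s, f x) = ∑ x ∈ s, fischer p (f x) := by
  rw [fischer_eq_sum p _ p.support subset_rfl]
  simp only [MvPolynomial.coeff_sum, Finset.mul_sum]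
  rw [Finset.sum_comm]
  exact Finset.sum_congr rfl fun x _ => (fischer_eq_sum p (f x) p.support subset_rfl).symm

lemma fischer_smul_right (c : ℝ) (p q : MvPolynomial (Fin n) ℝ) :
    fischer p (c • q) = c * fischer p q := by
  rw [fischer_eq_sum p (c • q) _ subset_rfl, fischer_eq_sum p q _ subset_rfl,
    Finset.mul_sum]
  exact Finset.sum_congr rfl fun m _ => by rw [MvPolynomial.coeff_smul, smul_eq_mul]; ring

lemma fischer_sub_left (p a b : MvPolynomial (Fin n) ℝ) :
    fischer (a - b) p = fischer a p - fischer b p := by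
  rw [fischer_symm, fischer_sub_right, fischer_symm a p, fischer_symm b p]

lemma fischer_sum_left {ι : Type*} (p : MvPolynomial (Fin n) ℝ) (s : Finset ι)
    (f : ι → MvPolynomial (Fin n) ℝ) :
    fischer (∑ x ∈ s, f x) p = ∑ x ∈ s, fischer (f x) p := by
  rw [fischer_symm, fischer_sum_right]
  exact Finset.sum_congr rfl fun x _ => fischer_symm p (f x)

lemma fischer_smul_left (c : ℝ) (p q : MvPolynomial (Fin n) ℝ) :
    fischer (c • p) q = c * fischer p q := by
  rw [fischer_symm, fischer_smul_right, fischer_symm q p]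

lemma fischer_swap (a b : MvPolynomial (Fin n) ℝ) (j k : Fin n) :
    fischer a (X k * pderiv j b) = fischer (X j * pderiv k a) b := by
  rw [fischer_symm, fischer_X_mul, fischer_symm, fischer_X_mul]

lemma adL_apply (N : Matrix (Fin n) (Fin n) ℝ) (q : Fin n → MvPolynomial (Fin n) ℝ)
    (i : Fin n) :
    adL N q i = (∑ j, (∑ k, N j k • (X k : MvPolynomial (Fin n) ℝ)) * pderiv j (q i))
      - ∑ j, N i j • q j := by
  simp [adL, LinearMap.pi_apply, LinearMap.sub_apply, LinearMap.sum_apply,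
    LinearMap.smul_apply, LinearMap.comp_apply, LinearMap.proj_apply, LinearMap.mulLeft_apply]

lemma fischerV_adL (N : Matrix (Fin n) (Fin n) ℝ) (p q : Fin n → MvPolynomial (Fin n) ℝ) :
    fischerV p (adL N q)
      = (∑ i, ∑ j, ∑ k, N j k * fischer (p i) (X k * pderiv j (q i)))
        - ∑ i, ∑ j, N i j * fischer (p i) (q j) := by
  rw [fischerV, ← Finset.sum_sub_distrib]
  refine Finset.sum_congr rfl fun i _ => ?_
  rw [adL_apply, fischer_sub_right, fischer_sum_right, fischer_sum_right]
  congr 1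
  · refine Finset.sum_congr rfl fun j _ => ?_
    rw [Finset.sum_mul, fischer_sum_right]
    exact Finset.sum_congr rfl fun k _ => by rw [smul_mul_assoc, fischer_smul_right]
  · exact Finset.sum_congr rfl fun j _ => by rw [fischer_smul_right]

lemma fischerV_adL_left (N : Matrix (Fin n) (Fin n) ℝ) (p q : Fin n → MvPolynomial (Fin n) ℝ) :
    fischerV (adL N p) q
      = (∑ i, ∑ j, ∑ k, N j k * fischer (X k * pderiv j (p i)) (q i))
        - ∑ i, ∑ j, N i j * fischer (p j) (q i) := by
  rw [fischerV, ← Finset.sum_sub_distrib]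
  refine Finset.sum_congr rfl fun i _ => ?_
  rw [adL_apply, fischer_sub_left, fischer_sum_left, fischer_sum_left]
  congr 1
  · refine Finset.sum_congr rfl fun j _ => ?_
    rw [Finset.sum_mul, fischer_sum_left]
    exact Finset.sum_congr rfl fun k _ => by rw [smul_mul_assoc, fischer_smul_left]
  · exact Finset.sum_congr rfl fun j _ => by rw [fischer_smul_left]

theorem adN_adjoint (n d : ℕ) (N : Matrix (Fin n) (Fin n) ℝ)
    (p q : Fin n → MvPolynomial (Fin n) ℝ) (hp : p ∈ Fnd n d) (hq : q ∈ Fnd n d) :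
    fischerV p (adL N q) = fischerV (adL Nᵀ p) q := by
  rw [fischerV_adL, fischerV_adL_left]
  congr 1
  · refine Finset.sum_congr rfl fun i _ => ?_
    rw [Finset.sum_comm]
    refine Finset.sum_congr rfl fun j _ => Finset.sum_congr rfl fun k _ => ?_
    rw [Matrix.transpose_apply, fischer_swap]
  · rw [Finset.sum_comm]
    refine Finset.sum_congr rfl fun i _ => Finset.sum_congr rfl fun j _ => ?_
    rw [Matrix.transpose_apply]
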